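/- There exist constants K ≥ 1 and c, C > 0 such that for every δ ∈ (0, 1] and all ξ₁, ξ₂ ∈ ℝ with ξ := ξ₁ + ξ₂, if ξ_max ≥ Kδ^{-1}, then c·δ^{-1}·ξ_min·ξ_max ≤ |Ξ̃_δ(ξ, ξ₁, ξ₂)| ≤ C·δ^{-1}·ξ_min·ξ_max, where ξ_max and ξ_min denote the largest and the smallest of |ξ|, |ξ₁|, |ξ₂|. -/

import Mathlib

open Real

/-- The Fourier multiplier of the scaled ILW dispersion operator:
`L_δ(ξ) = 6ξ² ∑_{k=1}^∞ 1/(k²π² + δ²ξ²)`. -/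
noncomputable def Ldelta (δ ξ : ℝ) : ℝ :=
  6 * ξ ^ 2 * ∑' k : ℕ, 1 / (((k : ℝ) + 1) ^ 2 * Real.pi ^ 2 + δ ^ 2 * ξ ^ 2)

/-- The dispersion symbol `p̃_δ(ξ) = ξ·L_δ(ξ)` of the scaled ILW. -/
noncomputable def ptilde (δ ξ : ℝ) : ℝ := ξ * Ldelta δ ξ

/-- The resonance function `Ξ̃_δ(ξ, ξ₁, ξ₂) = p̃_δ(ξ) − p̃_δ(ξ₁) − p̃_δ(ξ₂)`. -/
noncomputable def XiTilde (δ ξ ξ₁ ξ₂ : ℝ) : ℝ :=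
  ptilde δ ξ - ptilde δ ξ₁ - ptilde δ ξ₂

/-- If the largest frequency is at least `Kδ⁻¹`, then `|Ξ̃_δ| ∼ δ⁻¹·ξ_min·ξ_max`,
uniformly in `δ ∈ (0,1]`. -/

lemma ILW_summable_base : Summable (fun k : ℕ => 1 / ((k:ℝ)+1)^2) := by
  have h := (summable_nat_add_iff (f := fun n : ℕ => 1 / (n:ℝ)^2) 1).mpr
    (summable_one_div_nat_pow.mpr one_lt_two)
  exact h.congr (fun k => by push_cast; ring)

lemma ILW_summable_S (y : ℝ) (hy : 0 ≤ y) :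
    Summable (fun k : ℕ => 1 / (((k:ℝ)+1)^2 * Real.pi^2 + y)) := by
  refine Summable.of_nonneg_of_le (fun k => by positivity) (fun k => ?_)
    (ILW_summable_base.mul_left (1/Real.pi^2))
  have hπ : (0:ℝ) < Real.pi ^ 2 := by positivity
  have h1 : (0:ℝ) < ((k:ℝ)+1)^2 * Real.pi^2 := by positivity
  have : (1/Real.pi^2) * (1 / ((k:ℝ)+1)^2) = 1 / (((k:ℝ)+1)^2 * Real.pi^2) := by
    field_simp
    try ring
  rw [this]
  exact one_div_le_one_div_of_le h1 (le_add_of_nonneg_right hy)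

lemma ILW_summable_T (y : ℝ) (hy : 0 ≤ y) :
    Summable (fun k : ℕ => (((k:ℝ)+1)^2 * Real.pi^2) / ((((k:ℝ)+1)^2 * Real.pi^2 + y)^2)) := by
  refine Summable.of_nonneg_of_le (fun k => by positivity) (fun k => ?_) (ILW_summable_S y hy)
  have hA : (0:ℝ) < ((k:ℝ)+1)^2 * Real.pi^2 := by positivity
  have hAy : (0:ℝ) < ((k:ℝ)+1)^2 * Real.pi^2 + y := by linarith
  rw [div_le_div_iff₀ (by positivity) hAy]
  nlinarith [sq_nonneg (((k:ℝ)+1)^2 * Real.pi^2 + y)]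

lemma ILW_telescope (N : ℕ) (hN : 1 ≤ N) :
    HasSum (fun k : ℕ => 1/((k:ℝ)+N) - 1/((k:ℝ)+N+1)) (1/(N:ℝ)) := by
  have hNpos : (0:ℝ) < N := by exact_mod_cast hN
  have hpos : ∀ k : ℕ, (0:ℝ) < (k:ℝ)+N := fun k => by positivity
  have hnn : ∀ k : ℕ, 0 ≤ 1/((k:ℝ)+N) - 1/((k:ℝ)+N+1) := by
    intro k
    have := one_div_le_one_div_of_le (hpos k) (by linarith : ((k:ℝ)+N) ≤ (k:ℝ)+N+1)
    linarith
  have hpartial : ∀ n : ℕ, ∑ i ∈ Finset.range n, (1/((i:ℝ)+N) - 1/((i:ℝ)+N+1))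
      = 1/(N:ℝ) - 1/((n:ℝ)+N) := by
    intro n
    have := Finset.sum_range_sub' (fun i : ℕ => 1/((i:ℝ)+N)) n
    rw [show (1:ℝ)/(N:ℝ) - 1/((n:ℝ)+N) = (fun i : ℕ => 1/((i:ℝ)+N)) 0 - (fun i : ℕ => 1/((i:ℝ)+N)) n by norm_num, ← this]
    refine Finset.sum_congr rfl (fun i _ => by push_cast; ring_nf)
  have hsummable : Summable (fun k : ℕ => 1/((k:ℝ)+N) - 1/((k:ℝ)+N+1)) := by
    refine summable_of_sum_range_le hnn (fun n => ?_) (c := 1/(N:ℝ))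
    rw [hpartial n]
    have : (0:ℝ) < (n:ℝ)+N := by positivity
    have : 0 ≤ 1/((n:ℝ)+N) := by positivity
    linarith
  rw [hsummable.hasSum_iff_tendsto_nat]
  have h0 : Filter.Tendsto (fun n : ℕ => 1/((n:ℝ)+N)) Filter.atTop (nhds 0) := by
    simpa [one_div, Pi.inv_def] using
      (Filter.Tendsto.inv_tendsto_atTop
        (Filter.tendsto_atTop_add_const_right _ (N:ℝ) tendsto_natCast_atTop_atTop))
  have := (tendsto_const_nhds (x := 1/(N:ℝ)) (f := Filter.atTop (α := ℕ))).sub h0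
  simp only [sub_zero] at this
  exact (Filter.Tendsto.congr (fun n => (hpartial n).symm) this)

lemma ILW_tail_upper (N : ℕ) (hN : 1 ≤ N) :
    (∑' k : ℕ, 1/(((k:ℝ)+N+1)^2)) ≤ 1/(N:ℝ) := by
  have htel := ILW_telescope N hN
  have hpos : ∀ k : ℕ, (0:ℝ) < (k:ℝ)+N := fun k => by
    have : (0:ℝ) < N := by exact_mod_cast hN
    positivity
  have hterm : ∀ k : ℕ, 1/(((k:ℝ)+N+1)^2) ≤ 1/((k:ℝ)+N) - 1/((k:ℝ)+N+1) := by
    intro k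
    have h1 := hpos k
    have h2 : (0:ℝ) < (k:ℝ)+N+1 := by linarith
    have : 1/((k:ℝ)+N) - 1/((k:ℝ)+N+1) = 1/(((k:ℝ)+N)*((k:ℝ)+N+1)) := by
      field_simp
      try ring
    rw [this]
    apply one_div_le_one_div_of_le (by positivity)
    nlinarith
  have hsummable : Summable (fun k : ℕ => 1/(((k:ℝ)+N+1)^2)) :=
    Summable.of_nonneg_of_le (fun k => by positivity) hterm htel.summable
  calc (∑' k : ℕ, 1/(((k:ℝ)+N+1)^2))
      ≤ ∑' k : ℕ, (1/((k:ℝ)+N) - 1/((k:ℝ)+N+1)) :=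
        Summable.tsum_le_tsum hterm hsummable htel.summable
    _ = 1/(N:ℝ) := htel.tsum_eq

lemma ILW_tail_lower (N : ℕ) :
    1/((N:ℝ)+1) ≤ ∑' k : ℕ, 1/(((k:ℝ)+N+1)^2) := by
  have htel := ILW_telescope (N+1) (by omega)
  have hterm : ∀ k : ℕ, 1/((k:ℝ)+(N+1:ℕ)) - 1/((k:ℝ)+(N+1:ℕ)+1) ≤ 1/(((k:ℝ)+N+1)^2) := by
    intro k
    have h1 : (0:ℝ) < (k:ℝ)+N+1 := by positivity
    have heq : 1/((k:ℝ)+(N+1:ℕ)) - 1/((k:ℝ)+(N+1:ℕ)+1) = 1/(((k:ℝ)+N+1)*((k:ℝ)+N+2)) := by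
      push_cast
      field_simp
      ring
    rw [heq]
    apply one_div_le_one_div_of_le (by positivity)
    nlinarith
  have hsummable : Summable (fun k : ℕ => 1/(((k:ℝ)+N+1)^2)) := by
    refine Summable.of_nonneg_of_le (fun k => by positivity) (fun k => ?_)
      ((summable_nat_add_iff (f := fun n : ℕ => 1 / (n:ℝ)^2) (N+1)).mpr
        (summable_one_div_nat_pow.mpr one_lt_two))
    apply le_of_eq
    push_cast
    ring_nf
  have := Summable.tsum_le_tsum hterm htel.summable hsummable
  rw [htel.tsum_eq] at this
  push_cast at this ⊢
  linarith
lemma ILW_S_le (x : ℝ) (hx : 7 ≤ x) :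
    (∑' k : ℕ, 1 / (((k:ℝ)+1)^2 * Real.pi^2 + x^2)) ≤ 1/x := by
  have hπ3 := Real.pi_gt_three
  have hπ4 := Real.pi_le_four
  have hπ : (0:ℝ) < Real.pi := by linarith
  have hx0 : (0:ℝ) < x := by linarith
  set N := ⌈x/Real.pi⌉₊ with hNdef
  have hN1 : 1 ≤ N := Nat.one_le_ceil_iff.mpr (by positivity)
  have hNge : x/Real.pi ≤ (N:ℝ) := Nat.le_ceil _
  have hNle : (N:ℝ) ≤ 2*x/Real.pi := by
    have h1 : (N:ℝ) < x/Real.pi + 1 := Nat.ceil_lt_add_one (by positivity)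
    have h2 : (1:ℝ) ≤ x/Real.pi := (le_div_iff₀ hπ).mpr (by linarith)
    have : x/Real.pi + 1 ≤ 2*x/Real.pi := by
      rw [two_mul, add_div]; linarith
    linarith
  have hNR : (0:ℝ) < (N:ℝ) := by exact_mod_cast hN1
  have hsum := ILW_summable_S (x^2) (sq_nonneg x)
  rw [← Summable.sum_add_tsum_nat_add N hsum]
  -- head bound
  have hhead : ∑ i ∈ Finset.range N, 1 / (((i:ℝ)+1)^2 * Real.pi^2 + x^2) ≤ (N:ℝ) * (1/x^2) := by
    have := Finset.sum_le_card_nsmul (Finset.range N)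
      (fun i : ℕ => 1 / (((i:ℝ)+1)^2 * Real.pi^2 + x^2)) (1/x^2)
      (fun i _ => by
        apply one_div_le_one_div_of_le (by positivity)
        exact le_add_of_nonneg_left (by positivity))
    simpa [Finset.card_range, nsmul_eq_mul] using this
  -- tail bound
  have htail : (∑' k : ℕ, 1 / ((((k+N:ℕ):ℝ)+1)^2 * Real.pi^2 + x^2))
      ≤ (1/Real.pi^2) * (1/(N:ℝ)) := by
    have hterm : ∀ k : ℕ, 1 / ((((k+N:ℕ):ℝ)+1)^2 * Real.pi^2 + x^2)
        ≤ (1/Real.pi^2) * (1/(((k:ℝ)+N+1)^2)) := by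
      intro k
      have h1 : (0:ℝ) < ((k:ℝ)+N+1)^2 * Real.pi^2 := by positivity
      have heq : (1/Real.pi^2) * (1/(((k:ℝ)+N+1)^2)) = 1/(((k:ℝ)+N+1)^2 * Real.pi^2) := by
        field_simp
        try ring
      rw [heq]
      have hcast : (((k+N:ℕ):ℝ)+1) = ((k:ℝ)+N+1) := by push_cast; ring
      rw [hcast]
      exact one_div_le_one_div_of_le h1 (le_add_of_nonneg_right (sq_nonneg x))
    have hsummable1 : Summable (fun k : ℕ => 1 / ((((k+N:ℕ):ℝ)+1)^2 * Real.pi^2 + x^2)) :=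
      (summable_nat_add_iff (f := fun k : ℕ => 1 / (((k:ℝ)+1)^2 * Real.pi^2 + x^2)) N).mpr hsum
    have hsummable2 : Summable (fun k : ℕ => (1/Real.pi^2) * (1/(((k:ℝ)+N+1)^2))) := by
      apply Summable.mul_left
      refine Summable.of_nonneg_of_le (fun k => by positivity) (fun k => ?_)
        ((summable_nat_add_iff (f := fun n : ℕ => 1 / (n:ℝ)^2) (N+1)).mpr
          (summable_one_div_nat_pow.mpr one_lt_two))
      apply le_of_eq
      push_cast
      ring_nf
    calc (∑' k : ℕ, 1 / ((((k+N:ℕ):ℝ)+1)^2 * Real.pi^2 + x^2))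
        ≤ ∑' k : ℕ, (1/Real.pi^2) * (1/(((k:ℝ)+N+1)^2)) :=
          Summable.tsum_le_tsum hterm hsummable1 hsummable2
      _ = (1/Real.pi^2) * ∑' k : ℕ, (1/(((k:ℝ)+N+1)^2)) := tsum_mul_left
      _ ≤ (1/Real.pi^2) * (1/(N:ℝ)) := by
          apply mul_le_mul_of_nonneg_left (ILW_tail_upper N hN1) (by positivity)
  have hfin : (N:ℝ) * (1/x^2) + (1/Real.pi^2) * (1/(N:ℝ)) ≤ 1/x := by
    have h1 : (N:ℝ) * (1/x^2) ≤ 2/(Real.pi*x) := by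
      calc (N:ℝ) * (1/x^2) ≤ (2*x/Real.pi) * (1/x^2) := by
            apply mul_le_mul_of_nonneg_right hNle (by positivity)
        _ = 2/(Real.pi*x) := by field_simp
    have h2 : (1/Real.pi^2) * (1/(N:ℝ)) ≤ 1/(Real.pi*x) := by
      have : 1/(N:ℝ) ≤ Real.pi/x := by
        rw [div_le_div_iff₀ hNR hx0]
        rw [div_le_iff₀ hπ] at hNge
        linarith
      calc (1/Real.pi^2) * (1/(N:ℝ)) ≤ (1/Real.pi^2) * (Real.pi/x) := by
            apply mul_le_mul_of_nonneg_left this (by positivity)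
        _ = 1/(Real.pi*x) := by field_simp
    have h3 : 2/(Real.pi*x) + 1/(Real.pi*x) ≤ 1/x := by
      rw [← add_div, div_le_div_iff₀ (by positivity) hx0]
      nlinarith
    linarith
  linarith [hhead, htail]
lemma ILW_T_ge (x : ℝ) (hx : 7 ≤ x) :
    1/(8*Real.pi*x) ≤ ∑' k : ℕ, (((k:ℝ)+1)^2 * Real.pi^2) / ((((k:ℝ)+1)^2 * Real.pi^2 + x^2)^2) := by
  have hπ3 := Real.pi_gt_three
  have hπ4 := Real.pi_le_four
  have hπ : (0:ℝ) < Real.pi := by linarith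
  have hx0 : (0:ℝ) < x := by linarith
  set N := ⌈x/Real.pi⌉₊ with hNdef
  have hN1 : 1 ≤ N := Nat.one_le_ceil_iff.mpr (by positivity)
  have hNge : x/Real.pi ≤ (N:ℝ) := Nat.le_ceil _
  have hNR : (0:ℝ) < (N:ℝ) := by exact_mod_cast hN1
  have hN2 : (N:ℝ) + 1 ≤ 2*x/Real.pi := by
    have h1 : (N:ℝ) < x/Real.pi + 1 := Nat.ceil_lt_add_one (by positivity)
    have h2 : (2:ℝ) ≤ x/Real.pi := by
      rw [le_div_iff₀ hπ]; nlinarith [Real.pi_lt_d2]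
    rw [two_mul, add_div]; linarith
  have hsum := ILW_summable_T (x^2) (sq_nonneg x)
  rw [← Summable.sum_add_tsum_nat_add N hsum]
  have hheadnn : 0 ≤ ∑ i ∈ Finset.range N, (((i:ℝ)+1)^2 * Real.pi^2) / ((((i:ℝ)+1)^2 * Real.pi^2 + x^2)^2) :=
    Finset.sum_nonneg (fun i _ => by positivity)
  have htail : (1/(4*Real.pi^2)) * (1/((N:ℝ)+1))
      ≤ ∑' k : ℕ, ((((k+N:ℕ):ℝ)+1)^2 * Real.pi^2) / (((((k+N:ℕ):ℝ)+1)^2 * Real.pi^2 + x^2)^2) := by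
    have hterm : ∀ k : ℕ, (1/(4*Real.pi^2)) * (1/(((k:ℝ)+N+1)^2))
        ≤ ((((k+N:ℕ):ℝ)+1)^2 * Real.pi^2) / (((((k+N:ℕ):ℝ)+1)^2 * Real.pi^2 + x^2)^2) := by
      intro k
      have hcast : (((k+N:ℕ):ℝ)+1) = ((k:ℝ)+N+1) := by push_cast; ring
      rw [hcast]
      set A := ((k:ℝ)+N+1)^2 * Real.pi^2 with hA
      have hA0 : 0 < A := by rw [hA]; positivity
      have hAx : x^2 ≤ A := by
        rw [hA]
        have h1 : x ≤ Real.pi * N := by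
          rw [div_le_iff₀ hπ] at hNge; linarith
        have h2 : Real.pi * N ≤ Real.pi * ((k:ℝ)+N+1) := by
          apply mul_le_mul_of_nonneg_left _ hπ.le
          have : (0:ℝ) ≤ (k:ℝ) := Nat.cast_nonneg k
          linarith
        nlinarith
      have hq : (1/(4*Real.pi^2)) * (1/(((k:ℝ)+N+1)^2)) = 1/(4*A) := by
        rw [hA]; field_simp; try ring
      rw [hq]
      rw [div_le_div_iff₀ (by positivity) (by positivity)]
      nlinarith [sq_nonneg (A - x^2)]
    have hsummable2 : Summable (fun k : ℕ =>
        ((((k+N:ℕ):ℝ)+1)^2 * Real.pi^2) / (((((k+N:ℕ):ℝ)+1)^2 * Real.pi^2 + x^2)^2)) :=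
      (summable_nat_add_iff (f := fun k : ℕ =>
        (((k:ℝ)+1)^2 * Real.pi^2) / ((((k:ℝ)+1)^2 * Real.pi^2 + x^2)^2)) N).mpr hsum
    have hsummable1 : Summable (fun k : ℕ => (1/(4*Real.pi^2)) * (1/(((k:ℝ)+N+1)^2))) := by
      apply Summable.mul_left
      refine Summable.of_nonneg_of_le (fun k => by positivity) (fun k => ?_)
        ((summable_nat_add_iff (f := fun n : ℕ => 1 / (n:ℝ)^2) (N+1)).mpr
          (summable_one_div_nat_pow.mpr one_lt_two))
      apply le_of_eq
      push_cast
      ring_nf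
    calc (1/(4*Real.pi^2)) * (1/((N:ℝ)+1))
        ≤ (1/(4*Real.pi^2)) * ∑' k : ℕ, (1/(((k:ℝ)+N+1)^2)) := by
          apply mul_le_mul_of_nonneg_left (ILW_tail_lower N) (by positivity)
      _ = ∑' k : ℕ, (1/(4*Real.pi^2)) * (1/(((k:ℝ)+N+1)^2)) := tsum_mul_left.symm
      _ ≤ _ := Summable.tsum_le_tsum hterm hsummable1 hsummable2
  have hfin : 1/(8*Real.pi*x) ≤ (1/(4*Real.pi^2)) * (1/((N:ℝ)+1)) := by
    have h1 : 1/((N:ℝ)+1) ≥ Real.pi/(2*x) := by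
      rw [ge_iff_le, div_le_div_iff₀ (by positivity) (by positivity)]
      rw [le_div_iff₀ hπ] at hN2
      nlinarith
    calc 1/(8*Real.pi*x) = (1/(4*Real.pi^2)) * (Real.pi/(2*x)) := by field_simp; ring
      _ ≤ (1/(4*Real.pi^2)) * (1/((N:ℝ)+1)) := by
          apply mul_le_mul_of_nonneg_left h1 (by positivity)
  linarith
lemma ILW_ptilde_eq (δ ξ : ℝ) :
    ptilde δ ξ = ∑' k : ℕ, (6*ξ^3) * (1 / (((k:ℝ)+1)^2 * Real.pi^2 + δ^2*ξ^2)) := by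
  rw [tsum_mul_left, ptilde, Ldelta]; ring

lemma ILW_ptilde_neg (δ ξ : ℝ) : ptilde δ (-ξ) = -ptilde δ ξ := by
  simp only [ptilde, Ldelta, neg_sq]; ring

lemma ILW_ptilde_zero (δ : ℝ) : ptilde δ 0 = 0 := by
  simp [ptilde]

lemma ILW_xi_eq (δ a b : ℝ) (hδ : 0 < δ) (ha : 0 < a) (hb : 0 < b) :
    XiTilde δ (a+b) a b = ∑' k : ℕ,
      6*a*b*(((k:ℝ)+1)^2*Real.pi^2) *
        ((a+b+a) / ((((k:ℝ)+1)^2*Real.pi^2 + δ^2*a^2) * (((k:ℝ)+1)^2*Real.pi^2 + δ^2*(a+b)^2))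
         + (a+b+b) / ((((k:ℝ)+1)^2*Real.pi^2 + δ^2*b^2) * (((k:ℝ)+1)^2*Real.pi^2 + δ^2*(a+b)^2))) := by
  have hsa : Summable (fun k : ℕ => (6*a^3) * (1 / (((k:ℝ)+1)^2*Real.pi^2 + δ^2*a^2))) :=
    (ILW_summable_S _ (by positivity)).mul_left _
  have hsb : Summable (fun k : ℕ => (6*b^3) * (1 / (((k:ℝ)+1)^2*Real.pi^2 + δ^2*b^2))) :=
    (ILW_summable_S _ (by positivity)).mul_left _
  have hss : Summable (fun k : ℕ => (6*(a+b)^3) * (1 / (((k:ℝ)+1)^2*Real.pi^2 + δ^2*(a+b)^2))) :=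
    (ILW_summable_S _ (by positivity)).mul_left _
  rw [XiTilde, ILW_ptilde_eq, ILW_ptilde_eq, ILW_ptilde_eq,
    ← Summable.tsum_sub hss hsa, ← Summable.tsum_sub (hss.sub hsa) hsb]
  refine tsum_congr (fun k => ?_)
  have hA : (0:ℝ) < ((k:ℝ)+1)^2*Real.pi^2 := by positivity
  have h1 : (0:ℝ) < ((k:ℝ)+1)^2*Real.pi^2 + δ^2*a^2 := by positivity
  have h2 : (0:ℝ) < ((k:ℝ)+1)^2*Real.pi^2 + δ^2*b^2 := by positivity
  have h3 : (0:ℝ) < ((k:ℝ)+1)^2*Real.pi^2 + δ^2*(a+b)^2 := by positivity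
  field_simp
  ring

set_option maxHeartbeats 1000000 in
lemma ILW_core (δ a b : ℝ) (hδ : 0 < δ) (ha : 0 < a) (hb : 0 < b)
    (h7 : 7 ≤ δ*(a+b)) :
    (1/12) * δ⁻¹ * min a b * (a+b) ≤ XiTilde δ (a+b) a b ∧
      XiTilde δ (a+b) a b ≤ 18 * δ⁻¹ * min a b * (a+b) := by
  have hπ3 := Real.pi_gt_three
  have hπ4 := Real.pi_le_four
  have hπ : (0:ℝ) < Real.pi := by linarith
  obtain ⟨s, hs⟩ : ∃ s : ℝ, s = a + b := ⟨a+b, rfl⟩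
  have hXi0 := ILW_xi_eq δ a b hδ ha hb
  rw [← hs] at hXi0 ⊢
  have hs0 : 0 < s := by rw [hs]; positivity
  have hab : a ≤ s := by rw [hs]; linarith
  have hbb : b ≤ s := by rw [hs]; linarith
  have hx7 : 7 ≤ δ*s := by rw [hs]; exact h7
  have hδs : 0 < δ*s := by positivity
  have hsq : δ^2*s^2 = (δ*s)^2 := by ring
  have habs : s + a + (s + b) = 3*s := by rw [hs]; ring
  have hXi : XiTilde δ s a b = ∑' k : ℕ,
      6*a*b*(((k:ℝ)+1)^2*Real.pi^2) *
        ((s+a) / ((((k:ℝ)+1)^2*Real.pi^2 + δ^2*a^2) * (((k:ℝ)+1)^2*Real.pi^2 + δ^2*s^2))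
         + (s+b) / ((((k:ℝ)+1)^2*Real.pi^2 + δ^2*b^2) * (((k:ℝ)+1)^2*Real.pi^2 + δ^2*s^2))) := hXi0
  clear hXi0
  have hsumU : Summable (fun k : ℕ => (18*a*b*s) * (1 / (((k:ℝ)+1)^2*Real.pi^2 + δ^2*s^2))) := by
    have := (ILW_summable_S (δ^2*s^2) (by positivity)).mul_left (18*a*b*s)
    exact this
  have hsumLo : Summable (fun k : ℕ => (6*a*b*s) *
      ((((k:ℝ)+1)^2*Real.pi^2) / ((((k:ℝ)+1)^2*Real.pi^2 + δ^2*s^2)^2))) :=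
    (ILW_summable_T (δ^2*s^2) (by positivity)).mul_left _
  have hUbound : ∀ k : ℕ,
      6*a*b*(((k:ℝ)+1)^2*Real.pi^2) *
        ((s+a) / ((((k:ℝ)+1)^2*Real.pi^2 + δ^2*a^2) * (((k:ℝ)+1)^2*Real.pi^2 + δ^2*s^2))
         + (s+b) / ((((k:ℝ)+1)^2*Real.pi^2 + δ^2*b^2) * (((k:ℝ)+1)^2*Real.pi^2 + δ^2*s^2)))
      ≤ (18*a*b*s) * (1 / (((k:ℝ)+1)^2*Real.pi^2 + δ^2*s^2)) := by
    intro k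
    set A := ((k:ℝ)+1)^2*Real.pi^2 with hA
    have hA0 : 0 < A := by rw [hA]; positivity
    have h1 : (0:ℝ) < A + δ^2*a^2 := by positivity
    have h2 : (0:ℝ) < A + δ^2*b^2 := by positivity
    have h3 : (0:ℝ) < A + δ^2*s^2 := by positivity
    have key1 : A * ((s+a) / ((A + δ^2*a^2) * (A + δ^2*s^2))) ≤ (s+a) * (1/(A + δ^2*s^2)) := by
      have e : A * ((s+a) / ((A + δ^2*a^2) * (A + δ^2*s^2)))
          = (A/(A + δ^2*a^2)) * ((s+a)/(A + δ^2*s^2)) := by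
        field_simp
        try ring
      rw [e, mul_one_div]
      have hle : A/(A + δ^2*a^2) ≤ 1 := (div_le_one h1).mpr (by nlinarith [sq_nonneg (δ*a)])
      have hnn : 0 ≤ (s+a)/(A + δ^2*s^2) := by positivity
      have := mul_le_mul_of_nonneg_right hle hnn
      rw [one_mul] at this
      exact this
    have key2 : A * ((s+b) / ((A + δ^2*b^2) * (A + δ^2*s^2))) ≤ (s+b) * (1/(A + δ^2*s^2)) := by
      have e : A * ((s+b) / ((A + δ^2*b^2) * (A + δ^2*s^2)))
          = (A/(A + δ^2*b^2)) * ((s+b)/(A + δ^2*s^2)) := by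
        field_simp
        try ring
      rw [e, mul_one_div]
      have hle : A/(A + δ^2*b^2) ≤ 1 := (div_le_one h2).mpr (by nlinarith [sq_nonneg (δ*b)])
      have hnn : 0 ≤ (s+b)/(A + δ^2*s^2) := by positivity
      have := mul_le_mul_of_nonneg_right hle hnn
      rw [one_mul] at this
      exact this
    have hab6 : (0:ℝ) ≤ 6*a*b := by positivity
    calc 6*a*b*A * ((s+a)/((A + δ^2*a^2)*(A + δ^2*s^2)) + (s+b)/((A + δ^2*b^2)*(A + δ^2*s^2)))
        = 6*a*b * (A * ((s+a)/((A + δ^2*a^2)*(A + δ^2*s^2))) + A * ((s+b)/((A + δ^2*b^2)*(A + δ^2*s^2)))) := by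
          ring
      _ ≤ 6*a*b * ((s+a) * (1/(A + δ^2*s^2)) + (s+b) * (1/(A + δ^2*s^2))) :=
          mul_le_mul_of_nonneg_left (add_le_add key1 key2) hab6
      _ = 6*a*b * ((s+a+(s+b)) * (1/(A + δ^2*s^2))) := by ring
      _ = (18*a*b*s) * (1 / (A + δ^2*s^2)) := by rw [habs]; ring
  have hLobound : ∀ k : ℕ,
      (6*a*b*s) * ((((k:ℝ)+1)^2*Real.pi^2) / ((((k:ℝ)+1)^2*Real.pi^2 + δ^2*s^2)^2))
      ≤ 6*a*b*(((k:ℝ)+1)^2*Real.pi^2) *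
        ((s+a) / ((((k:ℝ)+1)^2*Real.pi^2 + δ^2*a^2) * (((k:ℝ)+1)^2*Real.pi^2 + δ^2*s^2))
         + (s+b) / ((((k:ℝ)+1)^2*Real.pi^2 + δ^2*b^2) * (((k:ℝ)+1)^2*Real.pi^2 + δ^2*s^2))) := by
    intro k
    set A := ((k:ℝ)+1)^2*Real.pi^2 with hA
    have hA0 : 0 < A := by rw [hA]; positivity
    have h1 : (0:ℝ) < A + δ^2*a^2 := by positivity
    have h2 : (0:ℝ) < A + δ^2*b^2 := by positivity
    have h3 : (0:ℝ) < A + δ^2*s^2 := by positivity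
    have key1 : s * (A/((A + δ^2*s^2)^2)) ≤ A * ((s+a)/((A + δ^2*a^2)*(A + δ^2*s^2))) := by
      have e1 : s * (A/((A + δ^2*s^2)^2)) = (A*s)/((A + δ^2*s^2)*(A + δ^2*s^2)) := by
        rw [sq (A + δ^2*s^2)]
        field_simp
        try ring
      have e2 : A * ((s+a)/((A + δ^2*a^2)*(A + δ^2*s^2)))
          = (A*(s+a))/((A + δ^2*a^2)*(A + δ^2*s^2)) := by
        field_simp
      rw [e1, e2]
      have ha2 : a^2 ≤ s^2 := by nlinarith
      have hda : δ^2*a^2 ≤ δ^2*s^2 := mul_le_mul_of_nonneg_left ha2 (sq_nonneg δ)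
      refine div_le_div₀ (by positivity)
        (mul_le_mul_of_nonneg_left (by linarith : s ≤ s+a) hA0.le) (by positivity) ?_
      exact mul_le_mul_of_nonneg_right (by linarith) h3.le
    have hrest : 0 ≤ A * ((s+b)/((A + δ^2*b^2)*(A + δ^2*s^2))) := by positivity
    have hab6 : (0:ℝ) ≤ 6*a*b := by positivity
    calc (6*a*b*s) * (A/((A + δ^2*s^2)^2))
        = 6*a*b * (s * (A/((A + δ^2*s^2)^2))) := by ring
      _ ≤ 6*a*b * (A * ((s+a)/((A + δ^2*a^2)*(A + δ^2*s^2))) + A * ((s+b)/((A + δ^2*b^2)*(A + δ^2*s^2)))) := by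
          apply mul_le_mul_of_nonneg_left _ hab6
          linarith [key1, hrest]
      _ = 6*a*b*A * ((s+a)/((A + δ^2*a^2)*(A + δ^2*s^2)) + (s+b)/((A + δ^2*b^2)*(A + δ^2*s^2))) := by
          ring
  have hsumG : Summable (fun k : ℕ =>
      6*a*b*(((k:ℝ)+1)^2*Real.pi^2) *
        ((s+a) / ((((k:ℝ)+1)^2*Real.pi^2 + δ^2*a^2) * (((k:ℝ)+1)^2*Real.pi^2 + δ^2*s^2))
         + (s+b) / ((((k:ℝ)+1)^2*Real.pi^2 + δ^2*b^2) * (((k:ℝ)+1)^2*Real.pi^2 + δ^2*s^2)))) := by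
    refine Summable.of_nonneg_of_le (fun k => ?_) hUbound hsumU
    have : 0 < s + a := by linarith
    have : 0 < s + b := by linarith
    positivity
  have hSval : (∑' k : ℕ, (1 / (((k:ℝ)+1)^2*Real.pi^2 + δ^2*s^2))) ≤ 1/(δ*s) := by
    have h := ILW_S_le (δ*s) hx7
    refine le_trans (le_of_eq (tsum_congr fun k => ?_)) h
    rw [hsq]
  have hTval : 1/(8*Real.pi*(δ*s)) ≤ ∑' k : ℕ,
      ((((k:ℝ)+1)^2*Real.pi^2) / ((((k:ℝ)+1)^2*Real.pi^2 + δ^2*s^2)^2)) := by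
    have h := ILW_T_ge (δ*s) hx7
    refine le_trans h (le_of_eq (tsum_congr fun k => ?_))
    rw [hsq]
  constructor
  · -- lower bound
    have h1 : (6*a*b*s) * ∑' k : ℕ, ((((k:ℝ)+1)^2*Real.pi^2) / ((((k:ℝ)+1)^2*Real.pi^2 + δ^2*s^2)^2))
        ≤ XiTilde δ s a b := by
      rw [hXi]
      rw [← (tsum_mul_left (a := 6*a*b*s)
        (f := fun k : ℕ => (((k:ℝ)+1)^2*Real.pi^2) / ((((k:ℝ)+1)^2*Real.pi^2 + δ^2*s^2)^2)))]
      exact Summable.tsum_le_tsum hLobound hsumLo hsumG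
    have h3 : (6*a*b*s) * (1/(8*Real.pi*(δ*s))) ≤ XiTilde δ s a b :=
      le_trans (mul_le_mul_of_nonneg_left hTval (by positivity)) h1
    have h4 : (6*a*b*s) * (1/(8*Real.pi*(δ*s))) = (3/(4*Real.pi)) * δ⁻¹ * (a*b) := by
      field_simp
      ring
    rw [h4] at h3
    refine le_trans ?_ h3
    have hmins : min a b * s ≤ 2*(a*b) := by
      rcases le_total a b with h | h
      · rw [min_eq_left h]; nlinarith
      · rw [min_eq_right h]; nlinarith
    have hc : (1/12) * (min a b * s) ≤ (3/(4*Real.pi)) * (a*b) := by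
      have h6 : (1/12) * (min a b * s) ≤ (1/6) * (a*b) := by linarith
      have h7' : (1/6:ℝ) ≤ 3/(4*Real.pi) := by
        rw [div_le_div_iff₀ (by norm_num) (by positivity)]
        nlinarith
      nlinarith [mul_pos ha hb]
    have hδinv : (0:ℝ) ≤ δ⁻¹ := by positivity
    calc (1/12) * δ⁻¹ * min a b * s = δ⁻¹ * ((1/12) * (min a b * s)) := by ring
      _ ≤ δ⁻¹ * ((3/(4*Real.pi)) * (a*b)) := mul_le_mul_of_nonneg_left hc hδinv
      _ = (3/(4*Real.pi)) * δ⁻¹ * (a*b) := by ring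
  · -- upper bound
    have h1 : XiTilde δ s a b ≤ (18*a*b*s) * ∑' k : ℕ, (1 / (((k:ℝ)+1)^2*Real.pi^2 + δ^2*s^2)) := by
      rw [hXi]
      rw [← (tsum_mul_left (a := 18*a*b*s)
        (f := fun k : ℕ => 1 / (((k:ℝ)+1)^2*Real.pi^2 + δ^2*s^2)))]
      exact Summable.tsum_le_tsum hUbound hsumG hsumU
    have h3 : XiTilde δ s a b ≤ (18*a*b*s) * (1/(δ*s)) :=
      le_trans h1 (mul_le_mul_of_nonneg_left hSval (by positivity))
    have h4 : (18*a*b*s) * (1/(δ*s)) = 18 * δ⁻¹ * (a*b) := by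
      field_simp
    rw [h4] at h3
    refine le_trans h3 ?_
    have hmm : a*b = min a b * max a b := (min_mul_max a b).symm
    have hmax : max a b ≤ s := max_le hab hbb
    have hmin0 : 0 ≤ min a b := le_min ha.le hb.le
    calc 18 * δ⁻¹ * (a*b) = 18 * δ⁻¹ * (min a b * max a b) := by rw [hmm]
      _ ≤ 18 * δ⁻¹ * (min a b * s) := by
          apply mul_le_mul_of_nonneg_left (mul_le_mul_of_nonneg_left hmax hmin0) (by positivity)
      _ = 18 * δ⁻¹ * min a b * s := by ring
lemma ILW_finisher (δ a b X : ℝ) (hδ : 0 < δ) (ha : 0 < a) (hb : 0 < b)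
    (hX : |X| = |XiTilde δ (a+b) a b|) (h7 : 7 * δ⁻¹ ≤ a + b) :
    (1/12) * δ⁻¹ * min a b * (a+b) ≤ |X| ∧ |X| ≤ 18 * δ⁻¹ * min a b * (a+b) := by
  have h7' : 7 ≤ δ*(a+b) := by
    have h := mul_le_mul_of_nonneg_left h7 hδ.le
    rw [show δ*(7*δ⁻¹) = 7 by field_simp] at h
    exact h
  obtain ⟨h1, h2⟩ := ILW_core δ a b hδ ha hb h7'
  have hnn : 0 ≤ XiTilde δ (a+b) a b := by
    refine le_trans ?_ h1
    have : 0 ≤ min a b := le_min ha.le hb.le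
    positivity
  rw [hX, abs_of_nonneg hnn]
  exact ⟨h1, h2⟩

theorem XiTilde_comparable_BO_high_freq :
    ∃ K : ℝ, 1 ≤ K ∧ ∃ c > 0, ∃ C > 0, ∀ δ ∈ Set.Ioc (0 : ℝ) 1, ∀ ξ₁ ξ₂ : ℝ,
      K * δ⁻¹ ≤ max |ξ₁ + ξ₂| (max |ξ₁| |ξ₂|) →
      c * δ⁻¹ * min |ξ₁ + ξ₂| (min |ξ₁| |ξ₂|) * max |ξ₁ + ξ₂| (max |ξ₁| |ξ₂|)
          ≤ |XiTilde δ (ξ₁ + ξ₂) ξ₁ ξ₂| ∧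
      |XiTilde δ (ξ₁ + ξ₂) ξ₁ ξ₂|
          ≤ C * δ⁻¹ * min |ξ₁ + ξ₂| (min |ξ₁| |ξ₂|) * max |ξ₁ + ξ₂| (max |ξ₁| |ξ₂|) := by
  refine ⟨7, by norm_num, 1/12, by norm_num, 18, by norm_num, ?_⟩
  rintro δ ⟨hδ0, hδ1⟩ ξ₁ ξ₂ hK
  by_cases hz1 : ξ₁ = 0
  · subst hz1
    have hXi : XiTilde δ (0+ξ₂) 0 ξ₂ = 0 := by
      simp [XiTilde, ILW_ptilde_zero, zero_add]
    have hmin : min |(0:ℝ)+ξ₂| (min |(0:ℝ)| |ξ₂|) = 0 := by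
      simp [abs_nonneg]
    rw [hXi, hmin]
    norm_num
  by_cases hz2 : ξ₂ = 0
  · subst hz2
    have hXi : XiTilde δ (ξ₁+0) ξ₁ 0 = 0 := by
      simp [XiTilde, ILW_ptilde_zero, add_zero]
    have hmin : min |ξ₁+(0:ℝ)| (min |ξ₁| |(0:ℝ)|) = 0 := by
      simp [abs_nonneg]
    rw [hXi, hmin]
    norm_num
  by_cases hzs : ξ₁ + ξ₂ = 0
  · have hXi : XiTilde δ (ξ₁+ξ₂) ξ₁ ξ₂ = 0 := by
      have hx2 : ξ₂ = -ξ₁ := by linarith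
      rw [hzs, hx2]
      simp [XiTilde, ILW_ptilde_zero, ILW_ptilde_neg]
    have hmin : min |ξ₁+ξ₂| (min |ξ₁| |ξ₂|) = 0 := by
      rw [hzs]
      simp [abs_nonneg]
    rw [hXi, hmin]
    norm_num
  rcases (lt_or_gt_of_ne hz1) with h1 | h1 <;> rcases (lt_or_gt_of_ne hz2) with h2 | h2
  · -- ξ₁ < 0, ξ₂ < 0
    have hs : ξ₁ + ξ₂ < 0 := by linarith
    have hX : |XiTilde δ (ξ₁+ξ₂) ξ₁ ξ₂| = |XiTilde δ (-ξ₁ + -ξ₂) (-ξ₁) (-ξ₂)| := by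
      have he : XiTilde δ (-ξ₁ + -ξ₂) (-ξ₁) (-ξ₂) = -XiTilde δ (ξ₁+ξ₂) ξ₁ ξ₂ := by
        rw [show -ξ₁ + -ξ₂ = -(ξ₁+ξ₂) by ring]
        simp only [XiTilde, ILW_ptilde_neg]
        ring
      rw [he, abs_neg]
    have hEmax : max |ξ₁+ξ₂| (max |ξ₁| |ξ₂|) = -ξ₁ + -ξ₂ := by
      rw [abs_of_neg hs, abs_of_neg h1, abs_of_neg h2,
        max_eq_left (max_le (by linarith) (by linarith))]
      ring
    have hEmin : min |ξ₁+ξ₂| (min |ξ₁| |ξ₂|) = min (-ξ₁) (-ξ₂) := by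
      rw [abs_of_neg hs, abs_of_neg h1, abs_of_neg h2]
      exact min_eq_right (le_trans (min_le_left _ _) (by linarith))
    rw [hEmax] at hK ⊢
    rw [hEmin]
    exact ILW_finisher δ (-ξ₁) (-ξ₂) _ hδ0 (by linarith) (by linarith) hX hK
  · -- ξ₁ < 0, ξ₂ > 0
    rcases (lt_or_gt_of_ne hzs) with hs | hs
    · -- sum < 0 : a = ξ₂, b = -(ξ₁+ξ₂), a+b = -ξ₁
      have hX : |XiTilde δ (ξ₁+ξ₂) ξ₁ ξ₂| = |XiTilde δ (ξ₂ + -(ξ₁+ξ₂)) ξ₂ (-(ξ₁+ξ₂))| := by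
        have he : XiTilde δ (ξ₂ + -(ξ₁+ξ₂)) ξ₂ (-(ξ₁+ξ₂)) = XiTilde δ (ξ₁+ξ₂) ξ₁ ξ₂ := by
          rw [show ξ₂ + -(ξ₁+ξ₂) = -ξ₁ by ring]
          simp only [XiTilde, ILW_ptilde_neg]
          ring
        rw [he]
      have hEmax : max |ξ₁+ξ₂| (max |ξ₁| |ξ₂|) = ξ₂ + -(ξ₁+ξ₂) := by
        rw [abs_of_neg hs, abs_of_neg h1, abs_of_pos h2,
          show max (-ξ₁) ξ₂ = -ξ₁ from max_eq_left (by linarith),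
          show max (-(ξ₁+ξ₂)) (-ξ₁) = -ξ₁ from max_eq_right (by linarith)]
        ring
      have hEmin : min |ξ₁+ξ₂| (min |ξ₁| |ξ₂|) = min ξ₂ (-(ξ₁+ξ₂)) := by
        rw [abs_of_neg hs, abs_of_neg h1, abs_of_pos h2,
          show min (-ξ₁) ξ₂ = ξ₂ from min_eq_right (by linarith),
          min_comm]
      rw [hEmax] at hK ⊢
      rw [hEmin]
      exact ILW_finisher δ ξ₂ (-(ξ₁+ξ₂)) _ hδ0 h2 (by linarith) hX hK
    · -- sum > 0 : a = ξ₁+ξ₂, b = -ξ₁, a+b = ξ₂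
      have hX : |XiTilde δ (ξ₁+ξ₂) ξ₁ ξ₂| = |XiTilde δ ((ξ₁+ξ₂) + -ξ₁) (ξ₁+ξ₂) (-ξ₁)| := by
        have he : XiTilde δ ((ξ₁+ξ₂) + -ξ₁) (ξ₁+ξ₂) (-ξ₁) = -XiTilde δ (ξ₁+ξ₂) ξ₁ ξ₂ := by
          rw [show (ξ₁+ξ₂) + -ξ₁ = ξ₂ by ring]
          simp only [XiTilde, ILW_ptilde_neg]
          ring
        rw [he, abs_neg]
      have hEmax : max |ξ₁+ξ₂| (max |ξ₁| |ξ₂|) = (ξ₁+ξ₂) + -ξ₁ := by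
        rw [abs_of_pos hs, abs_of_neg h1, abs_of_pos h2,
          show max (-ξ₁) ξ₂ = ξ₂ from max_eq_right (by linarith),
          show max (ξ₁+ξ₂) ξ₂ = ξ₂ from max_eq_right (by linarith)]
        ring
      have hEmin : min |ξ₁+ξ₂| (min |ξ₁| |ξ₂|) = min (ξ₁+ξ₂) (-ξ₁) := by
        rw [abs_of_pos hs, abs_of_neg h1, abs_of_pos h2,
          show min (-ξ₁) ξ₂ = -ξ₁ from min_eq_left (by linarith)]
      rw [hEmax] at hK ⊢
      rw [hEmin]
      exact ILW_finisher δ (ξ₁+ξ₂) (-ξ₁) _ hδ0 hs (by linarith) hX hK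
  · -- ξ₁ > 0, ξ₂ < 0
    rcases (lt_or_gt_of_ne hzs) with hs | hs
    · -- sum < 0 : a = ξ₁, b = -(ξ₁+ξ₂), a+b = -ξ₂
      have hX : |XiTilde δ (ξ₁+ξ₂) ξ₁ ξ₂| = |XiTilde δ (ξ₁ + -(ξ₁+ξ₂)) ξ₁ (-(ξ₁+ξ₂))| := by
        have he : XiTilde δ (ξ₁ + -(ξ₁+ξ₂)) ξ₁ (-(ξ₁+ξ₂)) = XiTilde δ (ξ₁+ξ₂) ξ₁ ξ₂ := by
          rw [show ξ₁ + -(ξ₁+ξ₂) = -ξ₂ by ring]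
          simp only [XiTilde, ILW_ptilde_neg]
          ring
        rw [he]
      have hEmax : max |ξ₁+ξ₂| (max |ξ₁| |ξ₂|) = ξ₁ + -(ξ₁+ξ₂) := by
        rw [abs_of_neg hs, abs_of_pos h1, abs_of_neg h2,
          show max ξ₁ (-ξ₂) = -ξ₂ from max_eq_right (by linarith),
          show max (-(ξ₁+ξ₂)) (-ξ₂) = -ξ₂ from max_eq_right (by linarith)]
        ring
      have hEmin : min |ξ₁+ξ₂| (min |ξ₁| |ξ₂|) = min ξ₁ (-(ξ₁+ξ₂)) := by
        rw [abs_of_neg hs, abs_of_pos h1, abs_of_neg h2,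
          show min ξ₁ (-ξ₂) = ξ₁ from min_eq_left (by linarith),
          min_comm]
      rw [hEmax] at hK ⊢
      rw [hEmin]
      exact ILW_finisher δ ξ₁ (-(ξ₁+ξ₂)) _ hδ0 h1 (by linarith) hX hK
    · -- sum > 0 : a = ξ₁+ξ₂, b = -ξ₂, a+b = ξ₁
      have hX : |XiTilde δ (ξ₁+ξ₂) ξ₁ ξ₂| = |XiTilde δ ((ξ₁+ξ₂) + -ξ₂) (ξ₁+ξ₂) (-ξ₂)| := by
        have he : XiTilde δ ((ξ₁+ξ₂) + -ξ₂) (ξ₁+ξ₂) (-ξ₂) = -XiTilde δ (ξ₁+ξ₂) ξ₁ ξ₂ := by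
          rw [show (ξ₁+ξ₂) + -ξ₂ = ξ₁ by ring]
          simp only [XiTilde, ILW_ptilde_neg]
          ring
        rw [he, abs_neg]
      have hEmax : max |ξ₁+ξ₂| (max |ξ₁| |ξ₂|) = (ξ₁+ξ₂) + -ξ₂ := by
        rw [abs_of_pos hs, abs_of_pos h1, abs_of_neg h2,
          show max ξ₁ (-ξ₂) = ξ₁ from max_eq_left (by linarith),
          show max (ξ₁+ξ₂) ξ₁ = ξ₁ from max_eq_right (by linarith)]
        ring
      have hEmin : min |ξ₁+ξ₂| (min |ξ₁| |ξ₂|) = min (ξ₁+ξ₂) (-ξ₂) := by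
        rw [abs_of_pos hs, abs_of_pos h1, abs_of_neg h2,
          show min ξ₁ (-ξ₂) = -ξ₂ from min_eq_right (by linarith)]
      rw [hEmax] at hK ⊢
      rw [hEmin]
      exact ILW_finisher δ (ξ₁+ξ₂) (-ξ₂) _ hδ0 hs (by linarith) hX hK
  · -- ξ₁ > 0, ξ₂ > 0
    have hs : 0 < ξ₁ + ξ₂ := by linarith
    have hEmax : max |ξ₁+ξ₂| (max |ξ₁| |ξ₂|) = ξ₁ + ξ₂ := by
      rw [abs_of_pos hs, abs_of_pos h1, abs_of_pos h2]
      exact max_eq_left (max_le (by linarith) (by linarith))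
    have hEmin : min |ξ₁+ξ₂| (min |ξ₁| |ξ₂|) = min ξ₁ ξ₂ := by
      rw [abs_of_pos hs, abs_of_pos h1, abs_of_pos h2]
      exact min_eq_right (le_trans (min_le_left _ _) (by linarith))
    rw [hEmax] at hK ⊢
    rw [hEmin]
    exact ILW_finisher δ ξ₁ ξ₂ _ hδ0 h1 h2 rfl hK
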